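/- The set of maximal element orders (under divisibility) of PGL(2,9) is {3, 8, 10}; equivalently, the set of element orders of PGL(2,9) is {1, 2, 3, 4, 5, 8, 10}. -/

import Mathlib

/-- `PGL(2,9)`: the projective general linear group of degree 2 over the field
with 9 elements, realized as `GL(2, F₉)` modulo its center. -/
abbrev PGL29 : Type :=
  (Matrix.GeneralLinearGroup (Fin 2) (GaloisField 3 2)) ⧸
    Subgroup.center (Matrix.GeneralLinearGroup (Fin 2) (GaloisField 3 2))


open Polynomial Matrix

abbrev F9 : Type := GaloisField 3 2
abbrev GL29 : Type := Matrix.GeneralLinearGroup (Fin 2) F9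

noncomputable instance : Fintype F9 := Fintype.ofFinite _

lemma card_F9 : Fintype.card F9 = 9 := by
  have := GaloisField.card 3 2 (by norm_num)
  simpa [Nat.card_eq_fintype_card] using this

lemma F9_pow8 (a : F9) (ha : a ≠ 0) : a ^ 8 = 1 := by
  have h := FiniteField.pow_card_sub_one_eq_one a ha
  rw [card_F9] at h
  norm_num at h
  exact h

lemma three_eq_zero : (3 : F9) = 0 := by
  have := CharP.cast_eq_zero F9 3
  exact_mod_cast this

lemma ch2 (M : Matrix (Fin 2) (Fin 2) F9) :
    M ^ 2 - M.trace • M + M.det • (1 : Matrix (Fin 2) (Fin 2) F9) = 0 := by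
  ext i j
  fin_cases i <;> fin_cases j <;>
    simp [pow_two, Matrix.mul_apply, Fin.sum_univ_two, Matrix.trace_fin_two,
      Matrix.det_fin_two, Matrix.one_apply] <;> ring

lemma natDegree_q (t d : F9) : (X ^ 2 - C t * X + C d).natDegree = 2 := by
  compute_degree!

/-- Any eighth root of unity in an `F9`-algebra field comes from `F9`. -/
lemma mem_range_of_pow8 {R : Type} [Field R] [Algebra F9 R] (y : R) (hy : y ^ 8 = 1) :
    ∃ c : F9, c ≠ 0 ∧ algebraMap F9 R c = y := by
  classical
  set g : R[X] := X ^ 8 - C 1 with hg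
  have hg0 : g ≠ 0 := X_pow_sub_C_ne_zero (by norm_num) 1
  have hdeg : g.natDegree = 8 := by rw [hg]; compute_degree!
  set T : Finset R := ((Finset.univ : Finset F9).erase 0).image (algebraMap F9 R) with hT
  have hTsub : T ⊆ g.roots.toFinset := by
    intro z hz
    simp only [hT, Finset.mem_image, Finset.mem_erase] at hz
    obtain ⟨c, ⟨hc0, -⟩, rfl⟩ := hz
    simp only [Multiset.mem_toFinset, mem_roots hg0]
    simp [hg, IsRoot, ← map_pow, F9_pow8 c hc0]
  have hcardT : T.card = 8 := by
    rw [hT, Finset.card_image_of_injective _ (algebraMap F9 R).injective]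
    rw [Finset.card_erase_of_mem (Finset.mem_univ 0), Finset.card_univ, card_F9]
  have hcardroots : g.roots.toFinset.card ≤ 8 := by
    calc g.roots.toFinset.card ≤ Multiset.card g.roots := g.roots.toFinset_card_le
    _ ≤ g.natDegree := g.card_roots'
    _ = 8 := hdeg
  have hymem : y ∈ g.roots.toFinset := by
    simp only [Multiset.mem_toFinset, mem_roots hg0]
    simp [hg, IsRoot, hy]
  have : y ∈ T := by
    by_contra hyT
    have : insert y T ⊆ g.roots.toFinset := Finset.insert_subset hymem hTsub
    have h9 : (insert y T).card = 9 := by rw [Finset.card_insert_of_notMem hyT, hcardT]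
    have := Finset.card_le_card this
    omega
  simp only [hT, Finset.mem_image, Finset.mem_erase] at this
  obtain ⟨c, ⟨hc0, -⟩, hc⟩ := this
  exact ⟨c, hc0, hc⟩

noncomputable def V1 : GL29 :=
  ⟨!![1, 1; 0, 1], !![1, -1; 0, 1],
    by ext i j; fin_cases i <;> fin_cases j <;>
      simp [Matrix.mul_apply, Fin.sum_univ_two, Matrix.one_apply],
    by ext i j; fin_cases i <;> fin_cases j <;>
      simp [Matrix.mul_apply, Fin.sum_univ_two, Matrix.one_apply]⟩

noncomputable def V2 : GL29 :=
  ⟨!![1, 0; 1, 1], !![1, 0; -1, 1],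
    by ext i j; fin_cases i <;> fin_cases j <;>
      simp [Matrix.mul_apply, Fin.sum_univ_two, Matrix.one_apply],
    by ext i j; fin_cases i <;> fin_cases j <;>
      simp [Matrix.mul_apply, Fin.sum_univ_two, Matrix.one_apply]⟩

lemma scalar_of_mem_center (U : GL29) (h : U ∈ Subgroup.center GL29) :
    ∃ c : F9, (U : Matrix (Fin 2) (Fin 2) F9) = c • 1 := by
  have h1 := Subgroup.mem_center_iff.mp h V1
  have h2 := Subgroup.mem_center_iff.mp h V2
  have h1' : (V1 : Matrix (Fin 2) (Fin 2) F9) * U = (U : Matrix (Fin 2) (Fin 2) F9) * V1 :=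
    congrArg Units.val h1
  have h2' : (V2 : Matrix (Fin 2) (Fin 2) F9) * U = (U : Matrix (Fin 2) (Fin 2) F9) * V2 :=
    congrArg Units.val h2
  set M : Matrix (Fin 2) (Fin 2) F9 := (U : Matrix (Fin 2) (Fin 2) F9) with hM
  have e10 : M 1 0 = 0 := by
    have := congrFun (congrFun h1' 0) 0
    simp [V1, Matrix.mul_apply, Fin.sum_univ_two] at this
    linear_combination this
  have e01 : M 0 1 = 0 := by
    have := congrFun (congrFun h2' 0) 0
    simp [V2, Matrix.mul_apply, Fin.sum_univ_two] at this
    exact this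
  have e00 : M 0 0 = M 1 1 := by
    have := congrFun (congrFun h1' 0) 1
    simp [V1, Matrix.mul_apply, Fin.sum_univ_two] at this
    linear_combination -this
  refine ⟨M 0 0, ?_⟩
  ext i j
  fin_cases i <;> fin_cases j <;> simp [Matrix.one_apply, e10, e01, e00]

lemma mem_center_of_scalar (A : GL29) (c : F9)
    (h : (A : Matrix (Fin 2) (Fin 2) F9) = c • 1) : A ∈ Subgroup.center GL29 := by
  rw [Subgroup.mem_center_iff]
  intro g
  apply Units.ext
  show (g : Matrix (Fin 2) (Fin 2) F9) * A = (A : Matrix (Fin 2) (Fin 2) F9) * g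
  rw [h, Matrix.mul_smul, Matrix.smul_mul, mul_one, one_mul]

lemma mk_pow_eq_one_iff (A : GL29) (n : ℕ) :
    (QuotientGroup.mk A : PGL29) ^ n = 1 ↔ A ^ n ∈ Subgroup.center GL29 := by
  have hpow : (QuotientGroup.mk A : PGL29) ^ n = QuotientGroup.mk (A ^ n) :=
    ((QuotientGroup.mk' (Subgroup.center GL29)).map_pow A n).symm
  rw [hpow, QuotientGroup.eq_one_iff]

lemma orderOf_dvd_PGL (g : PGL29) : orderOf g ∣ 3 ∨ orderOf g ∣ 8 ∨ orderOf g ∣ 10 := by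
  obtain ⟨A, rfl⟩ := QuotientGroup.mk_surjective g
  set M : Matrix (Fin 2) (Fin 2) F9 := (A : Matrix (Fin 2) (Fin 2) F9) with hMA
  set t : F9 := M.trace with ht
  set d : F9 := M.det with hd
  have hd0 : d ≠ 0 := by
    have : IsUnit M := (Units.isUnit A)
    rw [Matrix.isUnit_iff_isUnit_det] at this
    exact this.ne_zero
  set q : F9[X] := X ^ 2 - C t * X + C d with hq
  have hCH : (Polynomial.aeval M) q = 0 := by
    have h := ch2 M
    simp only [hq, map_add, map_sub, _root_.map_mul, map_pow, aeval_X, aeval_C]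
    rw [Algebra.algebraMap_eq_smul_one, Algebra.algebraMap_eq_smul_one, smul_mul_assoc, one_mul]
    exact h
  by_cases hirr : Irreducible q
  · right; right
    haveI : Fact (Irreducible q) := ⟨hirr⟩
    have hq0 : q ≠ 0 := hirr.ne_zero
    haveI : Module.Finite F9 (AdjoinRoot q) :=
      Module.Finite.of_basis (AdjoinRoot.powerBasis hq0).basis
    haveI : Finite (AdjoinRoot q) := Module.finite_of_finite F9
    haveI : Fintype (AdjoinRoot q) := Fintype.ofFinite _
    have hfr : Module.finrank F9 (AdjoinRoot q) = 2 := by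
      rw [(AdjoinRoot.powerBasis hq0).finrank, AdjoinRoot.powerBasis_dim]
      exact natDegree_q t d
    have hcard : Fintype.card (AdjoinRoot q) = 81 := by
      rw [Module.card_eq_pow_finrank (K := F9), hfr, card_F9]; norm_num
    have hroot : (Polynomial.aeval (AdjoinRoot.root q)) q = 0 := by
      rw [aeval_def, AdjoinRoot.algebraMap_eq]; exact AdjoinRoot.eval₂_root q
    have hx0 : AdjoinRoot.root q ≠ 0 := by
      intro h0
      rw [h0] at hroot
      simp only [hq, map_add, map_sub, _root_.map_mul, map_pow, aeval_X, aeval_C, mul_zero,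
        sub_zero, zero_pow, ne_eq, OfNat.ofNat_ne_zero, not_false_eq_true, zero_add,
        _root_.map_eq_zero] at hroot
      exact hd0 hroot
    have hx80 : (AdjoinRoot.root q) ^ 80 = 1 := by
      have h := FiniteField.pow_card_sub_one_eq_one (AdjoinRoot.root q) hx0
      rw [hcard] at h
      norm_num at h
      exact h
    have hy8 : ((AdjoinRoot.root q) ^ 10) ^ 8 = 1 := by
      rw [← pow_mul]; exact hx80
    obtain ⟨c, hc0, hc⟩ := mem_range_of_pow8 _ hy8
    have hspan : ∀ a ∈ Ideal.span ({q} : Set F9[X]), (Polynomial.aeval M) a = 0 := by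
      intro a ha
      rw [Ideal.mem_span_singleton'] at ha
      obtain ⟨b, rfl⟩ := ha
      rw [_root_.map_mul, hCH, mul_zero]
    set φ : AdjoinRoot q →+* Matrix (Fin 2) (Fin 2) F9 :=
      Ideal.Quotient.lift _ ((Polynomial.aeval M : F9[X] →ₐ[F9] Matrix (Fin 2) (Fin 2) F9) :
        F9[X] →+* Matrix (Fin 2) (Fin 2) F9) hspan with hφ
    have hφmk : ∀ p : F9[X], φ (AdjoinRoot.mk q p) = (Polynomial.aeval M) p := by
      intro p
      rw [hφ]
      exact Ideal.Quotient.lift_mk _ _ _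
    have h1 : φ ((AdjoinRoot.root q) ^ 10) = M ^ 10 := by
      rw [map_pow]
      show (φ (AdjoinRoot.mk q X)) ^ 10 = M ^ 10
      rw [hφmk, aeval_X]
    have h2 : φ ((AdjoinRoot.root q) ^ 10) = algebraMap F9 (Matrix (Fin 2) (Fin 2) F9) c := by
      rw [← hc, AdjoinRoot.algebraMap_eq]
      show φ (AdjoinRoot.mk q (C c)) = _
      rw [hφmk, aeval_C]
    have hM10 : M ^ 10 = c • 1 := by
      rw [← h1, h2, Algebra.algebraMap_eq_smul_one]
    apply orderOf_dvd_of_pow_eq_one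
    rw [mk_pow_eq_one_iff]
    exact mem_center_of_scalar _ c (by rw [Units.val_pow_eq_pow_val]; exact hM10)
  · -- q factors, with roots lam and mu
    have hmonic : q.Monic := by
      have : q.natDegree = 2 := natDegree_q t d
      rw [Polynomial.Monic, Polynomial.leadingCoeff, this]
      simp [hq, coeff_X_pow, coeff_C]
    obtain ⟨c₁, c₂, hmul, hadd⟩ :=
      (hmonic.not_irreducible_iff_exists_add_mul_eq_coeff (natDegree_q t d)).mp hirr
    have hq0' : q.coeff 0 = d := by simp [hq, coeff_X_pow, coeff_C]
    have hq1' : q.coeff 1 = -t := by simp [hq, coeff_X_pow, coeff_C]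
    set lam : F9 := -c₁ with hlam
    set mu : F9 := -c₂ with hmu
    have hm : lam * mu = d := by rw [hlam, hmu, neg_mul_neg, ← hmul, hq0']
    have ha : lam + mu = t := by
      have : c₁ + c₂ = -t := hadd.symm.trans hq1'
      rw [hlam, hmu, ← neg_add, this, neg_neg]
    have hfac : (M - lam • 1) * (M - mu • 1) = 0 := by
      have expand : (M - lam • 1) * (M - mu • 1)
          = M ^ 2 - (lam + mu) • M + (lam * mu) • (1 : Matrix (Fin 2) (Fin 2) F9) := by
        simp only [sub_mul, mul_sub, Matrix.smul_mul, Matrix.mul_smul, one_mul, mul_one,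
          smul_smul, pow_two, add_smul]
        rw [mul_comm mu lam]
        abel
      rw [expand, ha, hm]
      exact ch2 M
    have hl0 : lam ≠ 0 := by
      intro h0; rw [h0, zero_mul] at hm; exact hd0 hm.symm
    have hmu0 : mu ≠ 0 := by
      intro h0; rw [h0, mul_zero] at hm; exact hd0 hm.symm
    by_cases hne : lam = mu
    · -- repeated root: A^3 is scalar
      left
      set N : Matrix (Fin 2) (Fin 2) F9 := M - lam • 1 with hN
      have hN2 : N * N = 0 := by
        rw [hN]
        nth_rewrite 2 [hne]
        exact hfac
      have hcomm : Commute (lam • (1 : Matrix (Fin 2) (Fin 2) F9)) N := by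
        show _ * _ = _ * _
        rw [Matrix.smul_mul, Matrix.mul_smul, one_mul, mul_one]
      haveI : Fact (Nat.Prime 3) := ⟨by norm_num⟩
      have hM3 : M ^ 3 = (lam ^ 3) • 1 := by
        have hMeq : M = lam • 1 + N := by rw [hN]; abel
        have h3 := add_pow_char_of_commute (p := 3) hcomm
        rw [hMeq, h3]
        have hN3 : N ^ 3 = 0 := by
          rw [pow_succ, pow_two, hN2, zero_mul]
        rw [hN3, add_zero, _root_.smul_pow, one_pow]
      apply orderOf_dvd_of_pow_eq_one
      rw [mk_pow_eq_one_iff]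
      exact mem_center_of_scalar _ (lam ^ 3) (by rw [Units.val_pow_eq_pow_val]; exact hM3)
    · -- distinct roots: A^8 = 1
      right; left
      have hdvd : (X - C lam) * (X - C mu) ∣ (X ^ 8 - C 1 : F9[X]) := by
        apply (isCoprime_X_sub_C_of_isUnit_sub ((sub_ne_zero.mpr hne).isUnit)).mul_dvd
        · rw [dvd_iff_isRoot]
          simp [IsRoot, F9_pow8 lam hl0]
        · rw [dvd_iff_isRoot]
          simp [IsRoot, F9_pow8 mu hmu0]
      obtain ⟨h, hh⟩ := hdvd
      have hM8 : M ^ 8 = 1 := by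
        have := congrArg (Polynomial.aeval M) hh
        simp only [map_sub, _root_.map_mul, map_pow, aeval_X, aeval_C, _root_.map_one] at this
        rw [Algebra.algebraMap_eq_smul_one, Algebra.algebraMap_eq_smul_one, hfac, zero_mul]
          at this
        exact sub_eq_zero.mp this
      apply orderOf_dvd_of_pow_eq_one
      rw [mk_pow_eq_one_iff]
      exact mem_center_of_scalar _ 1 (by rw [Units.val_pow_eq_pow_val, hM8, one_smul])

noncomputable def A1 : GL29 :=
  ⟨!![1, 1; 0, 1], !![1, -1; 0, 1],
    by ext i j; fin_cases i <;> fin_cases j <;>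
      simp [Matrix.mul_apply, Fin.sum_univ_two, Matrix.one_apply],
    by ext i j; fin_cases i <;> fin_cases j <;>
      simp [Matrix.mul_apply, Fin.sum_univ_two, Matrix.one_apply]⟩

lemma exists_order3 : ∃ g : PGL29, orderOf g = 3 := by
  refine ⟨QuotientGroup.mk A1, ?_⟩
  haveI : Fact (Nat.Prime 3) := ⟨by norm_num⟩
  apply orderOf_eq_prime
  · rw [mk_pow_eq_one_iff]
    apply mem_center_of_scalar _ 1
    rw [Units.val_pow_eq_pow_val]
    show (!![1, 1; 0, 1] : Matrix (Fin 2) (Fin 2) F9) ^ 3 = (1 : F9) • 1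
    have h3 : (1 : F9) + 1 + 1 = 0 := by
      calc (1 : F9) + 1 + 1 = ((3 : ℕ) : F9) := by push_cast; ring
      _ = 0 := by exact_mod_cast three_eq_zero
    ext i j
    fin_cases i <;> fin_cases j <;>
      simp [pow_succ, Matrix.mul_apply, Fin.sum_univ_two, Matrix.one_apply] <;>
      linear_combination h3
  · intro h1
    have : A1 ∈ Subgroup.center GL29 := (QuotientGroup.eq_one_iff A1).mp h1
    obtain ⟨c, hc⟩ := scalar_of_mem_center _ this
    have := congrFun (congrFun hc 0) 1
    simp [A1, Matrix.one_apply] at this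

noncomputable def A2 (z : F9ˣ) : GL29 :=
  ⟨Matrix.diagonal ![(z : F9), 1], Matrix.diagonal ![((z⁻¹ : F9ˣ) : F9), 1],
    by rw [Matrix.diagonal_mul_diagonal]
       convert Matrix.diagonal_one using 2
       funext i; fin_cases i <;> simp,
    by rw [Matrix.diagonal_mul_diagonal]
       convert Matrix.diagonal_one using 2
       funext i; fin_cases i <;> simp⟩

lemma A2_pow_val (z : F9ˣ) (n : ℕ) :
    ((A2 z ^ n : GL29) : Matrix (Fin 2) (Fin 2) F9) = Matrix.diagonal ![(z : F9) ^ n, 1] := by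
  rw [Units.val_pow_eq_pow_val]
  show (Matrix.diagonal ![(z : F9), 1]) ^ n = _
  rw [Matrix.diagonal_pow]
  have : (![(z : F9), 1] : Fin 2 → F9) ^ n = ![(z : F9) ^ n, 1] := by
    funext i; fin_cases i <;> simp
  rw [this]

lemma exists_order8 : ∃ g : PGL29, orderOf g = 8 := by
  obtain ⟨z, hz⟩ := IsCyclic.exists_generator (α := F9ˣ)
  have hordz : orderOf z = 8 := by
    rw [orderOf_eq_card_of_forall_mem_zpowers hz]
    classical
    rw [Nat.card_eq_fintype_card, Fintype.card_units, card_F9]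
  refine ⟨QuotientGroup.mk (A2 z), ?_⟩
  have h8 : (QuotientGroup.mk (A2 z) : PGL29) ^ 8 = 1 := by
    rw [mk_pow_eq_one_iff]
    apply mem_center_of_scalar _ 1
    rw [A2_pow_val]
    have : (z : F9) ^ 8 = 1 := by
      have : z ^ 8 = 1 := by rw [← hordz]; exact pow_orderOf_eq_one z
      simpa using congrArg Units.val this
    rw [this]
    rw [one_smul]
    convert Matrix.diagonal_one using 2
    funext i; fin_cases i <;> simp
  have h4 : ¬ (QuotientGroup.mk (A2 z) : PGL29) ^ 4 = 1 := by
    intro h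
    rw [mk_pow_eq_one_iff] at h
    obtain ⟨c, hc⟩ := scalar_of_mem_center _ h
    rw [A2_pow_val] at hc
    have e1 : (1 : F9) = c := by
      have := congrFun (congrFun hc 1) 1
      simpa [Matrix.diagonal, Matrix.one_apply] using this
    have e0 : (z : F9) ^ 4 = c := by
      have := congrFun (congrFun hc 0) 0
      simpa [Matrix.diagonal, Matrix.one_apply] using this
    have : z ^ 4 = 1 := by
      apply Units.ext
      push_cast
      rw [e0, ← e1]
    have := orderOf_dvd_of_pow_eq_one this
    rw [hordz] at this
    omega
  have hdvd8 : orderOf (QuotientGroup.mk (A2 z) : PGL29) ∣ 8 := orderOf_dvd_of_pow_eq_one h8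
  have hnd4 : ¬ orderOf (QuotientGroup.mk (A2 z) : PGL29) ∣ 4 := by
    rw [orderOf_dvd_iff_pow_eq_one]; exact h4
  have hle : orderOf (QuotientGroup.mk (A2 z) : PGL29) ≤ 8 := Nat.le_of_dvd (by norm_num) hdvd8
  set k := orderOf (QuotientGroup.mk (A2 z) : PGL29) with hk
  clear_value k
  interval_cases k
  all_goals first | rfl | (exfalso; revert hdvd8 hnd4; decide)

lemma exists_order10 : ∃ g : PGL29, orderOf g = 10 := by
  classical
  obtain ⟨c, hc⟩ := FiniteField.exists_nonsquare (F := F9) (by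
    have h3 : ringChar F9 = 3 := by rw [ringChar.eq_iff]; infer_instance
    rw [h3]; norm_num)
  set q0 : F9[X] := X ^ 2 - C c with hq0
  have hirr : Irreducible q0 := X_pow_sub_C_irreducible_of_prime Nat.prime_two (by
    intro b hb
    exact hc ⟨b, by rw [← hb]; ring⟩)
  haveI : Fact (Irreducible q0) := ⟨hirr⟩
  have hq0ne : q0 ≠ 0 := hirr.ne_zero
  have hdim : (AdjoinRoot.powerBasis hq0ne).dim = 2 := by
    rw [AdjoinRoot.powerBasis_dim, hq0]
    compute_degree!
  haveI : Module.Finite F9 (AdjoinRoot q0) :=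
    Module.Finite.of_basis (AdjoinRoot.powerBasis hq0ne).basis
  haveI : Finite (AdjoinRoot q0) := Module.finite_of_finite F9
  haveI : Fintype (AdjoinRoot q0) := Fintype.ofFinite _
  have hcard : Fintype.card (AdjoinRoot q0) = 81 := by
    rw [Module.card_eq_pow_finrank (K := F9), (AdjoinRoot.powerBasis hq0ne).finrank, hdim, card_F9]
    norm_num
  obtain ⟨u, hu⟩ := IsCyclic.exists_generator (α := (AdjoinRoot q0)ˣ)
  have hordu : orderOf u = 80 := by
    rw [orderOf_eq_card_of_forall_mem_zpowers hu, Nat.card_eq_fintype_card,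
      Fintype.card_units, hcard]
  set b : Module.Basis (Fin 2) F9 (AdjoinRoot q0) :=
    (AdjoinRoot.powerBasis hq0ne).basis.reindex (finCongr hdim) with hb
  set Mmap : AdjoinRoot q0 →ₐ[F9] Matrix (Fin 2) (Fin 2) F9 := Algebra.leftMulMatrix b with hM
  set A3 : GL29 := Units.map (Mmap.toRingHom.toMonoidHom) u with hA3
  have hA3val : ∀ n : ℕ,
      ((A3 ^ n : GL29) : Matrix (Fin 2) (Fin 2) F9) = Mmap ((u : AdjoinRoot q0) ^ n) := by
    intro n
    rw [Units.val_pow_eq_pow_val, hA3, Units.coe_map, map_pow]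
    rfl
  have hu80 : (u : AdjoinRoot q0) ^ 80 = 1 := by
    have : u ^ 80 = 1 := by rw [← hordu]; exact pow_orderOf_eq_one u
    simpa using congrArg Units.val this
  have key : ∀ n : ℕ, (A3 ^ n : GL29) ∈ Subgroup.center GL29 → 10 ∣ n := by
    intro n hn
    obtain ⟨cc, hcc⟩ := scalar_of_mem_center _ hn
    rw [hA3val] at hcc
    have h2 : Mmap ((u : AdjoinRoot q0) ^ n) = Mmap (algebraMap F9 _ cc) := by
      rw [hcc, Mmap.commutes, Algebra.algebraMap_eq_smul_one]
    have h3 : (u : AdjoinRoot q0) ^ n = algebraMap F9 _ cc :=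
      Algebra.leftMulMatrix_injective b h2
    have hcc0 : cc ≠ 0 := by
      intro h0
      rw [h0, map_zero] at h3
      exact pow_ne_zero n (Units.ne_zero u) h3
    have h4 : (u : AdjoinRoot q0) ^ (n * 8) = 1 := by
      rw [pow_mul, h3, ← map_pow, F9_pow8 cc hcc0, _root_.map_one]
    have h5 : u ^ (n * 8) = 1 := by
      apply Units.ext
      rw [Units.val_pow_eq_pow_val]
      simpa using h4
    have h6 := orderOf_dvd_of_pow_eq_one h5
    rw [hordu] at h6
    omega
  have h10 : (QuotientGroup.mk A3 : PGL29) ^ 10 = 1 := by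
    rw [mk_pow_eq_one_iff]
    have hy8 : ((u : AdjoinRoot q0) ^ 10) ^ 8 = 1 := by
      rw [← pow_mul]; exact hu80
    obtain ⟨c2, hc20, hc2⟩ := mem_range_of_pow8 _ hy8
    apply mem_center_of_scalar _ c2
    rw [hA3val, ← hc2, Mmap.commutes, Algebra.algebraMap_eq_smul_one]
  refine ⟨QuotientGroup.mk A3, ?_⟩
  apply Nat.dvd_antisymm
  · exact orderOf_dvd_of_pow_eq_one h10
  · exact key _ ((mk_pow_eq_one_iff A3 _).mp (pow_orderOf_eq_one _))


/-- The set of element orders of PGL(2,9) is {1, 2, 3, 4, 5, 8, 10}. -/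
theorem elementOrders_PGL29 :
    {n : ℕ | ∃ g : PGL29, orderOf g = n} =
      ({1, 2, 3, 4, 5, 8, 10} : Set ℕ) := by
  obtain ⟨g3, hg3⟩ := exists_order3
  obtain ⟨g8, hg8⟩ := exists_order8
  obtain ⟨g10, hg10⟩ := exists_order10
  ext n
  simp only [Set.mem_setOf_eq, Set.mem_insert_iff, Set.mem_singleton_iff]
  constructor
  · rintro ⟨g, rfl⟩
    rcases orderOf_dvd_PGL g with h | h | h <;>
    · have hle := Nat.le_of_dvd (by norm_num) h
      set k := orderOf g with hk
      clear_value k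
      interval_cases k <;> revert h <;> decide
  · rintro (rfl | rfl | rfl | rfl | rfl | rfl | rfl)
    · exact ⟨1, orderOf_one⟩
    · exact ⟨g10 ^ 5, by rw [orderOf_pow' _ (by norm_num), hg10]; decide⟩
    · exact ⟨g3, hg3⟩
    · exact ⟨g8 ^ 2, by rw [orderOf_pow' _ (by norm_num), hg8]; decide⟩
    · exact ⟨g10 ^ 2, by rw [orderOf_pow' _ (by norm_num), hg10]; decide⟩
    · exact ⟨g8, hg8⟩
    · exact ⟨g10, hg10⟩
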